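/- Let k ≥ 2, ε ≥ 0, and let ŷ, â ∈ ℝ^k satisfy: ŷ_1 ≥ ŷ_2 ≥ … ≥ ŷ_k; ŷ_i + ŷ_j ≥ −4ε and â_i + â_j ≥ −4ε for all i ≠ j; and ŷ_i ≥ â_i − 4ε for all i. If ŷ_i ≤ 0 for every i ≥ 2, then for every i* ∈ {1,…,k}: â_1 + ŷ_1 ≥ â_{i*} − 14ε. -/
import Mathlib


namespace Stmt3

/-- Case `i⁺ ≤ 1` of the robustness analysis of the unconstrained non-monotone
algorithm: if `ŷ_i ≤ 0` for every `i ≥ 2`, then `â_1 + ŷ_1 ≥ â_{i*} − 14ε`. -/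
theorem stmt3 (k : ℕ) (hk : 2 ≤ k) (ε : ℝ) (hε : 0 ≤ ε) (y a : ℕ → ℝ)
    (hord : ∀ i ∈ Finset.Icc 1 k, ∀ j ∈ Finset.Icc 1 k, i ≤ j → y j ≤ y i)
    (hpy : ∀ i ∈ Finset.Icc 1 k, ∀ j ∈ Finset.Icc 1 k, i ≠ j →
      y i + y j ≥ -(4 * ε))
    (hpa : ∀ i ∈ Finset.Icc 1 k, ∀ j ∈ Finset.Icc 1 k, i ≠ j →
      a i + a j ≥ -(4 * ε))
    (hya : ∀ i ∈ Finset.Icc 1 k, y i ≥ a i - 4 * ε)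
    (hneg : ∀ i ∈ Finset.Icc 1 k, 2 ≤ i → y i ≤ 0)
    (istar : ℕ) (histar : istar ∈ Finset.Icc 1 k) :
    a 1 + y 1 ≥ a istar - 14 * ε := by
  have h1 : (1 : ℕ) ∈ Finset.Icc 1 k := Finset.mem_Icc.mpr ⟨le_refl 1, le_trans one_le_two hk⟩
  have h2 : (2 : ℕ) ∈ Finset.Icc 1 k := Finset.mem_Icc.mpr ⟨one_le_two, hk⟩
  rcases Finset.mem_Icc.mp histar with ⟨hi1, hik⟩
  rcases eq_or_lt_of_le hi1 with heq | hlt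
  · -- istar = 1
    have hy2 : y 2 ≤ 0 := hneg 2 h2 le_rfl
    have h12 : y 1 + y 2 ≥ -(4 * ε) := hpy 1 h1 2 h2 (by norm_num)
    rw [← heq]
    linarith
  · -- istar ≥ 2
    have hi2 : 2 ≤ istar := hlt
    have hyi : y istar ≤ 0 := hneg istar histar hi2
    have hai : y istar ≥ a istar - 4 * ε := hya istar histar
    have hyord : y istar ≤ y 1 := hord 1 h1 istar histar hi1
    have hpa1 : a 1 + a istar ≥ -(4 * ε) := hpa 1 h1 istar histar (by omega)
    linarith

end Stmt3
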